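/- Fix ϱ > 0, assume |θ| > ϱ and d·θ² ≤ 1. Then there exists a constant γ = γ(π, ϱ) > 0 such that x_{n+1} ≥ γ·x_n for all n ≥ 0. -/

import Mathlib

open Finset Filter

namespace AsymIsing

/-- Level-`k` vertices of the rooted `d`-ary tree: paths of length `k` from the root. -/
abbrev Vert (d k : ℕ) : Type := Fin k → Fin d

/-- A spin configuration on levels `0, …, n` of the `d`-ary tree. -/
abbrev Conf (d n : ℕ) : Type := ∀ k : Fin (n + 1), Vert d k → Fin 2

/-- A spin configuration on level `n` only. -/
abbrev LConf (d n : ℕ) : Type := Vert d n → Fin 2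

/-- The transition matrix of the asymmetric binary channel; the paper's state `1`
corresponds to the index `0` and the state `2` to the index `1`. -/
noncomputable def Mmat (θ Δ : ℝ) : Fin 2 → Fin 2 → ℝ := fun i j =>
  if i = 0 then (if j = 0 then (1 + θ - Δ) / 2 else (1 - θ + Δ) / 2)
  else (if j = 0 then (1 - θ - Δ) / 2 else (1 + θ + Δ) / 2)

/-- The stationary distribution `π = (π₁, π₂)` of the channel. -/
noncomputable def pst (θ Δ : ℝ) : Fin 2 → ℝ := fun i =>
  if i = 0 then 1 / 2 - Δ / (2 * (1 - θ)) else 1 / 2 + Δ / (2 * (1 - θ))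

/-- The root spin of a configuration. -/
def root {d n : ℕ} (σ : Conf d n) : Fin 2 := σ ⟨0, n.succ_pos⟩ (fun i => i.elim0)

/-- The restriction of a configuration to the last (`n`-th) level. -/
def top {d n : ℕ} (σ : Conf d n) : LConf d n := σ (Fin.last n)

/-- The probability of a full configuration on levels `0, …, n` under the broadcast
process: the root is drawn from `π` and spins propagate along edges via `M`. -/
noncomputable def confProb (d : ℕ) (θ Δ : ℝ) (n : ℕ) (σ : Conf d n) : ℝ :=
  pst θ Δ (root σ) *
    ∏ k : Fin n, ∏ v : Vert d (k + 1),
      Mmat θ Δ (σ k.castSucc (v ∘ Fin.castSucc)) (σ k.succ v)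

/-- `P(σ(n) = A)`: the marginal law of the level-`n` spins. -/
noncomputable def levelProb (d : ℕ) (θ Δ : ℝ) (n : ℕ) (A : LConf d n) : ℝ :=
  ∑ σ : Conf d n, if top σ = A then confProb d θ Δ n σ else 0

/-- `P(σ_ρ = i, σ(n) = A)`. -/
noncomputable def jointProb (d : ℕ) (θ Δ : ℝ) (n : ℕ) (i : Fin 2) (A : LConf d n) : ℝ :=
  ∑ σ : Conf d n, if root σ = i ∧ top σ = A then confProb d θ Δ n σ else 0

/-- The posterior `f_n(i, A) = P(σ_ρ = i ∣ σ(n) = A)`. -/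
noncomputable def post (d : ℕ) (θ Δ : ℝ) (n : ℕ) (i : Fin 2) (A : LConf d n) : ℝ :=
  jointProb d θ Δ n i A / levelProb d θ Δ n A

/-- The law of `σ^i(n)`, i.e. `P(σ(n) = A ∣ σ_ρ = i)`. -/
noncomputable def condLevel (d : ℕ) (θ Δ : ℝ) (n : ℕ) (i : Fin 2) (A : LConf d n) : ℝ :=
  jointProb d θ Δ n i A / pst θ Δ i

/-- The total variation distance between `σ^1(n)` and `σ^2(n)`. -/
noncomputable def tvDist (d : ℕ) (θ Δ : ℝ) (n : ℕ) : ℝ :=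
  (1 / 2) * ∑ A : LConf d n, |condLevel d θ Δ n 0 A - condLevel d θ Δ n 1 A|

/-- The reconstruction problem is solvable if `limsup_n d_TV(σ^1(n), σ^2(n)) > 0`. -/
def solvable (d : ℕ) (θ Δ : ℝ) : Prop :=
  0 < Filter.limsup (fun n => tvDist d θ Δ n) Filter.atTop

/-- Non-reconstruction: `limsup_n d_TV(σ^1(n), σ^2(n)) = 0`. -/
def nonReconstruction (d : ℕ) (θ Δ : ℝ) : Prop :=
  Filter.limsup (fun n => tvDist d θ Δ n) Filter.atTop = 0

/-- Expectation of a function of the level-`n` configuration, conditioned on `σ_ρ = 1`. -/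
noncomputable def expect1 (d : ℕ) (θ Δ : ℝ) (n : ℕ) (g : LConf d n → ℝ) : ℝ :=
  ∑ A : LConf d n, condLevel d θ Δ n 0 A * g A

/-- `x_n = E f_n(1, σ^1(n)) − π₁`. -/
noncomputable def xseq (d : ℕ) (θ Δ : ℝ) (n : ℕ) : ℝ :=
  expect1 d θ Δ n (fun A => post d θ Δ n 0 A) - pst θ Δ 0

/-- `z_n = E (f_n(1, σ^1(n)) − π₁)²`. -/
noncomputable def zseq (d : ℕ) (θ Δ : ℝ) (n : ℕ) : ℝ :=
  expect1 d θ Δ n (fun A => (post d θ Δ n 0 A - pst θ Δ 0) ^ 2)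

/-- The restriction of a level-`(n+1)` configuration to the subtree of the `j`-th
child of the root (paths starting with `j`). -/
def restrictChild {d n : ℕ} (j : Fin d) (A : LConf d (n + 1)) : LConf d n :=
  fun w => A (Fin.cons j w)

/-- `Y_j = f_n(1, σ_j(n+1))`, as a function of the level-`(n+1)` configuration. -/
noncomputable def Yfun (d : ℕ) (θ Δ : ℝ) (n : ℕ) (j : Fin d) (A : LConf d (n + 1)) : ℝ :=
  post d θ Δ n 0 (restrictChild j A)

/-- `Z₁ = ∏_j (1 + (θ/π₁)(Y_j − π₁))`, as a function of the level-`(n+1)` configuration. -/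
noncomputable def Z1fun (d : ℕ) (θ Δ : ℝ) (n : ℕ) (A : LConf d (n + 1)) : ℝ :=
  ∏ j : Fin d, (1 + (θ / pst θ Δ 0) * (Yfun d θ Δ n j A - pst θ Δ 0))

/-- `Z₂ = ∏_j (1 − (θ/π₂)(Y_j − π₁))`, as a function of the level-`(n+1)` configuration. -/
noncomputable def Z2fun (d : ℕ) (θ Δ : ℝ) (n : ℕ) (A : LConf d (n + 1)) : ℝ :=
  ∏ j : Fin d, (1 - (θ / pst θ Δ 1) * (Yfun d θ Δ n j A - pst θ Δ 0))

/-- The value of `Δ` making `π = (π₁, π₂)` the stationary distribution of the channel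
with second eigenvalue `θ`, namely `Δ = (1 − θ)(π₂ − π₁)`. -/
noncomputable def Dlt (θ π1 π2 : ℝ) : ℝ := (1 - θ) * (π2 - π1)

/-- The Gaussian-approximation function
`f(s) = E[π₁ e^{sμ₁+√s W₁} / (π₁ e^{sμ₁+√s W₁} + π₂ e^{sμ₂+√s W₂})] − π₁`,
where `μ₁ = 1/(2π₁)`, `μ₂ = −(1+π₂)/(2π₂²)`, `W₁ ∼ N(0, 1/π₁)` (realized as `w/√π₁`
for `w` standard Gaussian) and `W₂ = −(π₁/π₂)·W₁`. -/
noncomputable def gfun (π1 π2 : ℝ) (s : ℝ) : ℝ :=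
  (∫ w : ℝ,
      (π1 * Real.exp (s * (1 / (2 * π1)) + Real.sqrt s * (w / Real.sqrt π1))) /
        (π1 * Real.exp (s * (1 / (2 * π1)) + Real.sqrt s * (w / Real.sqrt π1)) +
          π2 * Real.exp (s * (-(1 + π2) / (2 * π2 ^ 2)) +
            Real.sqrt s * (-(π1 / π2) * (w / Real.sqrt π1))))
    ∂(ProbabilityTheory.gaussianReal 0 1)) - π1


section Aux

variable {d : ℕ}

/-- The product-over-edges part of `confProb`. -/
noncomputable def body (θ Δ : ℝ) (n : ℕ) (σ : Conf d n) : ℝ :=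
  ∏ k : Fin n, ∏ v : Vert d (k + 1),
    Mmat θ Δ (σ k.castSucc (v ∘ Fin.castSucc)) (σ k.succ v)

lemma confProb_eq (θ Δ : ℝ) (n : ℕ) (σ : Conf d n) :
    confProb d θ Δ n σ = pst θ Δ (root σ) * body θ Δ n σ := rfl

/-- The configuration of the `j`-th child subtree. -/
def child (j : Fin d) {n : ℕ} (σ : Conf d (n + 1)) : Conf d n :=
  fun k w => σ k.succ (Fin.cons j w)

lemma top_child (j : Fin d) {n : ℕ} (σ : Conf d (n + 1)) :
    top (child j σ) = restrictChild j (top σ) := rfl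

def confEquiv {n : ℕ} : Conf d (n + 1) ≃ Fin 2 × (Fin d → Conf d n) where
  toFun σ := (root σ, fun j => child j σ)
  invFun p := fun k =>
    match k with
    | ⟨0, _⟩ => fun _ => p.1
    | ⟨k' + 1, h⟩ => fun v => p.2 (v 0) ⟨k', Nat.lt_of_succ_lt_succ h⟩ (Fin.tail v)
  left_inv σ := by
    funext k
    obtain ⟨kv, hk⟩ := k
    cases kv with
    | zero =>
        funext v
        exact congrArg (σ ⟨0, hk⟩) (funext fun i => i.elim0)
    | succ kv' =>
        funext v
        exact congrArg (σ ⟨kv' + 1, hk⟩) (Fin.cons_self_tail v)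
  right_inv p := by
    refine Prod.ext rfl ?_
    funext j k w
    show p.2 ((Fin.cons (α := fun _ => Fin d) j w) 0) k
        (Fin.tail (Fin.cons (α := fun _ => Fin d) j w)) = p.2 j k w
    rw [Fin.cons_zero, Fin.tail_cons]

lemma confEquiv_symm_root {n : ℕ} (p : Fin 2 × (Fin d → Conf d n)) :
    root (confEquiv.symm p) = p.1 := congrArg Prod.fst (confEquiv.apply_symm_apply p)

lemma confEquiv_symm_child {n : ℕ} (p : Fin 2 × (Fin d → Conf d n)) (j : Fin d) :
    child j (confEquiv.symm p) = p.2 j := by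
  have h := congrArg Prod.snd (confEquiv.apply_symm_apply p)
  exact congrFun h j

lemma cons_comp_castSucc {m : ℕ} (j : Fin d) (w : Fin (m + 1) → Fin d) :
    (Fin.cons (α := fun _ => Fin d) j w) ∘ Fin.castSucc
      = Fin.cons (α := fun _ => Fin d) j (w ∘ Fin.castSucc) := by
  funext i
  induction i using Fin.cases with
  | zero => simp
  | succ i' =>
      show (Fin.cons (α := fun _ => Fin d) j w) (Fin.castSucc i'.succ) = w (Fin.castSucc i')
      rw [← Fin.succ_castSucc, Fin.cons_succ]

lemma body_succ (θ Δ : ℝ) (n : ℕ) (σ : Conf d (n + 1)) :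
    body θ Δ (n + 1) σ
      = ∏ j : Fin d,
          (Mmat θ Δ (root σ) (root (child j σ)) * body θ Δ n (child j σ)) := by
  unfold body
  rw [Fin.prod_univ_succ, Finset.prod_mul_distrib]
  congr 1
  · -- level-0 edges
    haveI : Unique (Fin (((0 : Fin (n + 1)) : ℕ) + 1)) := inferInstanceAs (Unique (Fin 1))
    rw [← Equiv.prod_comp
      (Equiv.funUnique (Fin (((0 : Fin (n + 1)) : ℕ) + 1)) (Fin d)).symm]
    refine Finset.prod_congr rfl fun j _ => ?_
    show Mmat θ Δ (σ (0 : Fin (n + 1)).castSucc ((fun _ => j) ∘ Fin.castSucc))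
        (σ (0 : Fin (n + 1)).succ (fun _ => j))
      = Mmat θ Δ (root σ) (root (child j σ))
    have e1 : σ (0 : Fin (n + 1)).castSucc ((fun _ => j) ∘ Fin.castSucc) = root σ :=
      congrArg (σ (0 : Fin (n + 1)).castSucc) (funext fun i => i.elim0)
    have hc : (fun (_ : Fin (((0 : Fin (n + 1)) : ℕ) + 1)) => j)
        = Fin.cons (α := fun _ => Fin d) j (fun i => i.elim0) := by
      funext i
      induction i using Fin.cases with
      | zero => rfl
      | succ i' => exact i'.elim0
    have e2 : σ (0 : Fin (n + 1)).succ (fun _ => j) = root (child j σ) :=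
      congrArg (σ (0 : Fin (n + 1)).succ) hc
    rw [e1, e2]
  · -- deeper edges
    refine Eq.trans (Finset.prod_congr rfl fun k _ => ?_) Finset.prod_comm
    show (∏ v : Fin ((k : ℕ) + 1 + 1) → Fin d,
        Mmat θ Δ (σ k.succ.castSucc (v ∘ Fin.castSucc)) (σ k.succ.succ v))
      = ∏ j : Fin d, ∏ v : Vert d ((k : ℕ) + 1),
          Mmat θ Δ (child j σ k.castSucc (v ∘ Fin.castSucc)) (child j σ k.succ v)
    rw [← Equiv.prod_comp (Fin.consEquiv (fun _ : Fin ((k : ℕ) + 1 + 1) => Fin d)),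
      Fintype.prod_prod_type]
    refine Finset.prod_congr rfl fun j _ => ?_
    refine Finset.prod_congr rfl fun w _ => ?_
    show Mmat θ Δ (σ k.succ.castSucc ((Fin.cons (α := fun _ => Fin d) j w) ∘ Fin.castSucc))
        (σ k.succ.succ (Fin.cons (α := fun _ => Fin d) j w))
      = Mmat θ Δ (child j σ k.castSucc (w ∘ Fin.castSucc)) (child j σ k.succ w)
    rw [cons_comp_castSucc]
    rfl

noncomputable def Wt (θ Δ : ℝ) (n : ℕ) (i : Fin 2) (B : LConf d n) : ℝ :=
  ∑ σ : Conf d n, if root σ = i ∧ top σ = B then body θ Δ n σ else 0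

def lconfEquiv {n : ℕ} : LConf d (n + 1) ≃ (Fin d → LConf d n) where
  toFun A := fun j => restrictChild j A
  invFun T := fun v => T (v 0) (Fin.tail v)
  left_inv A := by
    funext v
    show A (Fin.cons (v 0) (Fin.tail v)) = A v
    rw [Fin.cons_self_tail]
  right_inv T := by
    funext j w
    show T ((Fin.cons (α := fun _ => Fin d) j w) 0)
        (Fin.tail (Fin.cons (α := fun _ => Fin d) j w)) = T j w
    rw [Fin.cons_zero, Fin.tail_cons]

lemma top_eq_iff {n : ℕ} (σ : Conf d (n + 1)) (A : LConf d (n + 1)) :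
    top σ = A ↔ ∀ j, top (child j σ) = restrictChild j A := by
  constructor
  · intro h j; rw [top_child, h]
  · intro h
    funext v
    have h2 : σ ((Fin.last n).succ) (Fin.cons (v 0) (Fin.tail v))
        = A (Fin.cons (v 0) (Fin.tail v)) := congrFun (h (v 0)) (Fin.tail v)
    rw [Fin.cons_self_tail] at h2
    exact h2

lemma prod_ite_zero {ι : Type*} [Fintype ι] (c : ι → Prop) [DecidablePred c] (x : ι → ℝ) :
    (∏ j, if c j then x j else 0) = if (∀ j, c j) then ∏ j, x j else 0 := by
  by_cases h : ∀ j, c j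
  · rw [if_pos h]
    exact Finset.prod_congr rfl fun j _ => if_pos (h j)
  · rw [if_neg h]
    push_neg at h
    obtain ⟨j, hj⟩ := h
    exact Finset.prod_eq_zero (Finset.mem_univ j) (if_neg hj)

lemma sum_root_split {n : ℕ} (B : LConf d n) (g : Fin 2 → Conf d n → ℝ) :
    (∑ σ : Conf d n, if top σ = B then g (root σ) σ else 0)
      = ∑ c : Fin 2, ∑ σ : Conf d n, if root σ = c ∧ top σ = B then g c σ else 0 := by
  rw [Finset.sum_comm]
  refine Finset.sum_congr rfl fun σ _ => ?_
  have : ∀ c : Fin 2, (if root σ = c ∧ top σ = B then g c σ else 0)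
      = if root σ = c then (if top σ = B then g c σ else 0) else 0 := by
    intro c; rw [ite_and]
  rw [Finset.sum_congr rfl fun c _ => this c, Finset.sum_ite_eq]
  simp

lemma Wt_succ (θ Δ : ℝ) (n : ℕ) (i : Fin 2) (A : LConf d (n + 1)) :
    Wt θ Δ (n + 1) i A
      = ∏ j : Fin d, ∑ c : Fin 2, Mmat θ Δ i c * Wt θ Δ n c (restrictChild j A) := by
  unfold Wt
  rw [← Equiv.sum_comp (confEquiv (d := d) (n := n)).symm, Fintype.sum_prod_type]
  have key : ∀ (r : Fin 2) (τ : Fin d → Conf d n),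
      (if root (confEquiv.symm (r, τ)) = i ∧ top (confEquiv.symm (r, τ)) = A
          then body θ Δ (n + 1) (confEquiv.symm (r, τ)) else 0)
        = if r = i then
            ∏ j, (if top (τ j) = restrictChild j A
              then Mmat θ Δ r (root (τ j)) * body θ Δ n (τ j) else 0) else 0 := by
    intro r τ
    have hch : ∀ j, child j (confEquiv.symm (r, τ)) = τ j := confEquiv_symm_child (r, τ)
    rw [body_succ, confEquiv_symm_root]
    rw [prod_ite_zero (fun j => top (τ j) = restrictChild j A)
      (fun j => Mmat θ Δ r (root (τ j)) * body θ Δ n (τ j))]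
    simp only [top_eq_iff, hch, ite_and]
    by_cases h1 : r = i
    · by_cases h2 : ∀ j, top (τ j) = restrictChild j A <;> simp [h1, h2]
    · simp [h1]
  rw [Finset.sum_congr rfl fun r _ => Finset.sum_congr rfl fun τ _ => key r τ]
  rw [Finset.sum_comm, Finset.sum_congr rfl fun τ _ => Finset.sum_ite_eq' Finset.univ i _]
  simp only [Finset.mem_univ, if_pos]
  rw [← Fintype.piFinset_univ, ← Finset.prod_univ_sum (fun _ : Fin d => (Finset.univ : Finset (Conf d n)))
    (fun j σ => if top σ = restrictChild j A then Mmat θ Δ i (root σ) * body θ Δ n σ else 0)]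
  refine Finset.prod_congr rfl fun j _ => ?_
  have := sum_root_split (d := d) (restrictChild j A)
      (fun c σ => Mmat θ Δ i c * body θ Δ n σ)
  rw [this]
  refine Finset.sum_congr rfl fun c _ => ?_
  rw [Finset.mul_sum]
  exact Finset.sum_congr rfl fun σ _ => by rw [mul_ite, mul_zero]

lemma Mrow (θ Δ : ℝ) (i : Fin 2) : Mmat θ Δ i 0 + Mmat θ Δ i 1 = 1 := by
  fin_cases i <;> simp [Mmat] <;> ring

def rootEquiv : Conf d 0 ≃ Fin 2 where
  toFun := root
  invFun r := fun _ _ => r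
  left_inv σ := by
    funext k v
    obtain ⟨kv, hk⟩ := k
    cases kv with
    | zero => exact congrArg (σ ⟨0, hk⟩) (funext fun i => i.elim0)
    | succ kv' => exact absurd hk (by omega)
  right_inv r := rfl

lemma Wt_total (θ Δ : ℝ) (n : ℕ) (i : Fin 2) :
    (∑ B : LConf d n, Wt θ Δ n i B)
      = ∑ σ : Conf d n, if root σ = i then body θ Δ n σ else 0 := by
  unfold Wt
  rw [Finset.sum_comm]
  refine Finset.sum_congr rfl fun σ _ => ?_
  have h : ∀ B : LConf d n, (if root σ = i ∧ top σ = B then body θ Δ n σ else 0)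
      = if top σ = B then (if root σ = i then body θ Δ n σ else 0) else 0 := by
    intro B
    by_cases h1 : root σ = i <;> by_cases h2 : top σ = B <;> simp [h1, h2]
  rw [Finset.sum_congr rfl fun B _ => h B, Finset.sum_ite_eq]
  simp

lemma Wt_sum (θ Δ : ℝ) : ∀ (n : ℕ) (i : Fin 2), (∑ B : LConf d n, Wt θ Δ n i B) = 1 := by
  intro n
  induction n with
  | zero =>
      intro i
      rw [Wt_total]
      have hb : ∀ σ : Conf d 0, body θ Δ 0 σ = 1 := by
        intro σ; unfold body; simp
      rw [Finset.sum_congr rfl fun σ _ => by rw [hb σ]]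
      rw [← Equiv.sum_comp (rootEquiv (d := d)).symm]
      have hr : ∀ r : Fin 2, root ((rootEquiv (d := d)).symm r) = r := fun r => rfl
      rw [Finset.sum_congr rfl fun r _ => by rw [hr r]]
      rw [Finset.sum_ite_eq' Finset.univ i]
      simp
  | succ n ih =>
      intro i
      rw [Finset.sum_congr rfl fun A _ => Wt_succ θ Δ n i A]
      rw [← Equiv.sum_comp (lconfEquiv (d := d) (n := n)).symm]
      have hrc : ∀ (T : Fin d → LConf d n) (j : Fin d),
          restrictChild j (lconfEquiv.symm T) = T j :=
        fun T j => congrFun (lconfEquiv.apply_symm_apply T) j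
      simp only [hrc]
      rw [← Fintype.piFinset_univ,
        ← Finset.prod_univ_sum (fun _ : Fin d => (Finset.univ : Finset (LConf d n)))
          (fun _ B' => ∑ c : Fin 2, Mmat θ Δ i c * Wt θ Δ n c B')]
      have hone : ∀ j : Fin d,
          (∑ B' : LConf d n, ∑ c : Fin 2, Mmat θ Δ i c * Wt θ Δ n c B') = 1 := by
        intro j
        rw [Finset.sum_comm]
        have : ∀ c : Fin 2, (∑ B' : LConf d n, Mmat θ Δ i c * Wt θ Δ n c B')
            = Mmat θ Δ i c := by
          intro c
          rw [← Finset.mul_sum, ih c, mul_one]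
        rw [Finset.sum_congr rfl fun c _ => this c, Fin.sum_univ_two, Mrow]
      rw [Finset.prod_congr rfl fun j _ => hone j, Finset.prod_const_one]

lemma joint_eq (θ Δ : ℝ) (n : ℕ) (i : Fin 2) (A : LConf d n) :
    jointProb d θ Δ n i A = pst θ Δ i * Wt θ Δ n i A := by
  unfold jointProb Wt
  rw [Finset.mul_sum]
  refine Finset.sum_congr rfl fun σ _ => ?_
  by_cases h : root σ = i ∧ top σ = A
  · rw [if_pos h, if_pos h, confProb_eq, h.1]
  · rw [if_neg h, if_neg h, mul_zero]

lemma level_eq (θ Δ : ℝ) (n : ℕ) (A : LConf d n) :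
    levelProb d θ Δ n A = jointProb d θ Δ n 0 A + jointProb d θ Δ n 1 A := by
  unfold levelProb jointProb
  rw [← Finset.sum_add_distrib]
  refine Finset.sum_congr rfl fun σ _ => ?_
  have h2 : root σ = 0 ∨ root σ = 1 := by omega
  by_cases h : top σ = A
  · rcases h2 with h2 | h2 <;> simp [h, h2]
  · simp [h]

lemma body_nonneg {θ Δ : ℝ} (hM : ∀ i j, 0 ≤ Mmat θ Δ i j) (n : ℕ) (σ : Conf d n) :
    0 ≤ body θ Δ n σ :=
  Finset.prod_nonneg fun k _ => Finset.prod_nonneg fun v _ => hM _ _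

lemma Wt_nonneg {θ Δ : ℝ} (hM : ∀ i j, 0 ≤ Mmat θ Δ i j) (n : ℕ) (i : Fin 2)
    (B : LConf d n) : 0 ≤ Wt θ Δ n i B :=
  Finset.sum_nonneg fun σ _ => by
    by_cases h : root σ = i ∧ top σ = B
    · rw [if_pos h]; exact body_nonneg hM n σ
    · rw [if_neg h]

lemma fiber_partition {α β : Type*} [Fintype α] [Fintype β] [DecidableEq β]
    (r : α → β) (f : α → ℝ) :
    (∑ b : β, ∑ a : α, if r a = b then f a else 0) = ∑ a : α, f a := by
  rw [Finset.sum_comm]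
  refine Finset.sum_congr rfl fun a _ => ?_
  rw [Finset.sum_ite_eq]
  simp

lemma Wt_fiber (θ Δ : ℝ) (n : ℕ) [NeZero d] (i : Fin 2) (B : LConf d n) :
    (∑ A : LConf d (n + 1), if restrictChild 0 A = B then Wt θ Δ (n + 1) i A else 0)
      = ∑ c : Fin 2, Mmat θ Δ i c * Wt θ Δ n c B := by
  rw [Finset.sum_congr rfl fun A _ => by rw [Wt_succ θ Δ n i A]]
  rw [← Equiv.sum_comp (lconfEquiv (d := d) (n := n)).symm]
  have hrc : ∀ (T : Fin d → LConf d n) (j : Fin d),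
      restrictChild j (lconfEquiv.symm T) = T j :=
    fun T j => congrFun (lconfEquiv.apply_symm_apply T) j
  simp only [hrc]
  set g : LConf d n → ℝ := fun C => ∑ c : Fin 2, Mmat θ Δ i c * Wt θ Δ n c C with hg
  have key : ∀ T : Fin d → LConf d n,
      (if T 0 = B then ∏ j : Fin d, g (T j) else 0)
        = ∏ j : Fin d, (if j = 0 then (if T j = B then g (T j) else 0) else g (T j)) := by
    intro T
    by_cases h : T 0 = B
    · rw [if_pos h]
      refine Finset.prod_congr rfl fun j _ => ?_
      by_cases hj : j = 0
      · subst hj; rw [if_pos rfl, if_pos h]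
      · rw [if_neg hj]
    · rw [if_neg h]
      symm
      refine Finset.prod_eq_zero (Finset.mem_univ (0 : Fin d)) ?_
      rw [if_pos rfl, if_neg h]
  rw [Finset.sum_congr rfl fun T _ => key T]
  rw [← Fintype.piFinset_univ,
    ← Finset.prod_univ_sum (fun _ : Fin d => (Finset.univ : Finset (LConf d n)))
      (fun j C => if j = 0 then (if C = B then g C else 0) else g C)]
  have hfac : ∀ j : Fin d,
      (∑ C : LConf d n, if j = 0 then (if C = B then g C else 0) else g C)
        = if j = 0 then g B else 1 := by
    intro j
    by_cases hj : j = 0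
    · rw [if_pos hj]
      rw [Finset.sum_congr rfl fun C _ => if_pos hj]
      rw [Finset.sum_ite_eq' Finset.univ B g]
      simp
    · rw [if_neg hj]
      rw [Finset.sum_congr rfl fun C _ => if_neg hj]
      rw [hg]
      rw [Finset.sum_comm]
      have : ∀ c : Fin 2, (∑ C : LConf d n, Mmat θ Δ i c * Wt θ Δ n c C)
          = Mmat θ Δ i c := by
        intro c; rw [← Finset.mul_sum, Wt_sum θ Δ n c, mul_one]
      rw [Finset.sum_congr rfl fun c _ => this c, Fin.sum_univ_two, Mrow]
  rw [Finset.prod_congr rfl fun j _ => hfac j, Finset.prod_ite_eq' Finset.univ (0 : Fin d)]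
  simp [hg]

lemma pst_add (θ Δ : ℝ) : pst θ Δ 0 + pst θ Δ 1 = 1 := by
  show (1 / 2 - Δ / (2 * (1 - θ))) + (1 / 2 + Δ / (2 * (1 - θ))) = 1
  ring

lemma joint_nonneg {θ Δ : ℝ} (hM : ∀ i j, 0 ≤ Mmat θ Δ i j)
    (hp : ∀ i, 0 ≤ pst θ Δ i) (n : ℕ) (i : Fin 2) (A : LConf d n) :
    0 ≤ jointProb d θ Δ n i A := by
  rw [joint_eq]; exact mul_nonneg (hp i) (Wt_nonneg hM n i A)

lemma level_nonneg {θ Δ : ℝ} (hM : ∀ i j, 0 ≤ Mmat θ Δ i j)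
    (hp : ∀ i, 0 ≤ pst θ Δ i) (n : ℕ) (A : LConf d n) :
    0 ≤ levelProb d θ Δ n A := by
  rw [level_eq]
  exact add_nonneg (joint_nonneg hM hp n 0 A) (joint_nonneg hM hp n 1 A)

lemma joint_le_level {θ Δ : ℝ} (hM : ∀ i j, 0 ≤ Mmat θ Δ i j)
    (hp : ∀ i, 0 ≤ pst θ Δ i) (n : ℕ) (A : LConf d n) :
    jointProb d θ Δ n 0 A ≤ levelProb d θ Δ n A := by
  rw [level_eq]
  linarith [joint_nonneg hM hp n 1 A]

lemma joint_mul_post {θ Δ : ℝ} (hM : ∀ i j, 0 ≤ Mmat θ Δ i j)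
    (hp : ∀ i, 0 ≤ pst θ Δ i) (n : ℕ) (A : LConf d n) :
    jointProb d θ Δ n 0 A = levelProb d θ Δ n A * post d θ Δ n 0 A := by
  unfold post
  rcases eq_or_ne (levelProb d θ Δ n A) 0 with h | h
  · rw [h, zero_mul]
    have h1 := joint_le_level hM hp n A
    have h2 := joint_nonneg hM hp n 0 A
    rw [h] at h1
    linarith
  · field_simp

lemma sum_joint (θ Δ : ℝ) (n : ℕ) (i : Fin 2) :
    (∑ A : LConf d n, jointProb d θ Δ n i A) = pst θ Δ i := by
  rw [Finset.sum_congr rfl fun A _ => joint_eq θ Δ n i A, ← Finset.mul_sum,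
    Wt_sum θ Δ n i, mul_one]

lemma sum_level (θ Δ : ℝ) (n : ℕ) :
    (∑ A : LConf d n, levelProb d θ Δ n A) = 1 := by
  rw [Finset.sum_congr rfl fun A _ => level_eq θ Δ n A, Finset.sum_add_distrib,
    sum_joint, sum_joint, pst_add]

lemma xseq_eq {θ Δ : ℝ} (hM : ∀ i j, 0 ≤ Mmat θ Δ i j)
    (hp : ∀ i, 0 ≤ pst θ Δ i) (hp0 : pst θ Δ 0 ≠ 0) (n : ℕ) :
    xseq d θ Δ n
      = (∑ B : LConf d n, levelProb d θ Δ n B * post d θ Δ n 0 B ^ 2) / pst θ Δ 0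
        - pst θ Δ 0 := by
  unfold xseq expect1 condLevel
  congr 1
  have h : ∀ B : LConf d n, jointProb d θ Δ n 0 B / pst θ Δ 0 * post d θ Δ n 0 B
      = levelProb d θ Δ n B * post d θ Δ n 0 B ^ 2 / pst θ Δ 0 := by
    intro B; rw [joint_mul_post hM hp n B]; ring
  rw [Finset.sum_congr rfl fun B _ => h B, ← Finset.sum_div]

lemma cs_sum {α : Type*} [Fintype α] (q u : α → ℝ) (hq : ∀ a, 0 ≤ q a) :
    (∑ a : α, q a * u a) ^ 2 ≤ (∑ a : α, q a) * (∑ a : α, q a * u a ^ 2) := by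
  have h := Finset.sum_mul_sq_le_sq_mul_sq Finset.univ
    (fun a => Real.sqrt (q a)) (fun a => Real.sqrt (q a) * u a)
  have e1 : ∀ a, Real.sqrt (q a) * (Real.sqrt (q a) * u a) = q a * u a := fun a => by
    rw [← mul_assoc, Real.mul_self_sqrt (hq a)]
  have e2 : ∀ a, Real.sqrt (q a) ^ 2 = q a := fun a => Real.sq_sqrt (hq a)
  have e3 : ∀ a, (Real.sqrt (q a) * u a) ^ 2 = q a * u a ^ 2 := fun a => by
    rw [mul_pow, e2]
  simp only [e1, e2, e3] at h
  exact h

lemma xseq_nonneg {θ Δ : ℝ} (hM : ∀ i j, 0 ≤ Mmat θ Δ i j)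
    (hp : ∀ i, 0 ≤ pst θ Δ i) (hp0 : 0 < pst θ Δ 0) (n : ℕ) :
    0 ≤ xseq d θ Δ n := by
  rw [xseq_eq hM hp (ne_of_gt hp0) n]
  have hcs := cs_sum (fun B => levelProb d θ Δ n B) (fun B => post d θ Δ n 0 B)
    (fun B => level_nonneg hM hp n B)
  have h1 : (∑ B : LConf d n, levelProb d θ Δ n B * post d θ Δ n 0 B) = pst θ Δ 0 := by
    rw [Finset.sum_congr rfl fun B _ => (joint_mul_post hM hp n B).symm, sum_joint]
  simp only [h1, sum_level, one_mul] at hcs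
  rw [sub_nonneg, le_div_iff₀ hp0]
  nlinarith [hcs]

lemma key_step {θ Δ : ℝ} [NeZero d] (π1 : ℝ)
    (hpi1 : 0 < π1)
    (hM : ∀ i j, 0 ≤ Mmat θ Δ i j)
    (hp : ∀ i, 0 ≤ pst θ Δ i)
    (hp0 : pst θ Δ 0 = π1)
    (hM00 : Mmat θ Δ 0 0 = θ + (1 - θ) * π1)
    (hM01 : Mmat θ Δ 0 1 = (1 - θ) * (1 - π1))
    (hM10 : Mmat θ Δ 1 0 = (1 - θ) * π1)
    (hM11 : Mmat θ Δ 1 1 = θ + (1 - θ) * (1 - π1))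
    (n : ℕ) :
    θ ^ 2 * xseq d θ Δ n ≤ xseq d θ Δ (n + 1) := by
  have hp1 : pst θ Δ 1 = 1 - π1 := by
    have := pst_add θ Δ
    rw [hp0] at this; linarith
  have hp0pos : 0 < pst θ Δ 0 := by rw [hp0]; exact hpi1
  -- the per-fiber inequality
  have hfiber : ∀ B : LConf d n,
      θ ^ 2 * (levelProb d θ Δ n B * post d θ Δ n 0 B ^ 2)
          + 2 * θ * ((1 - θ) * π1) * jointProb d θ Δ n 0 B
          + ((1 - θ) * π1) ^ 2 * levelProb d θ Δ n B
        ≤ ∑ A : LConf d (n + 1),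
            (if restrictChild 0 A = B
              then levelProb d θ Δ (n + 1) A * post d θ Δ (n + 1) 0 A ^ 2 else 0) := by
    intro B
    have hWf0 := Wt_fiber θ Δ n (0 : Fin 2) B
    have hWf1 := Wt_fiber θ Δ n (1 : Fin 2) B
    have hSQ : (∑ A : LConf d (n + 1),
        if restrictChild 0 A = B then levelProb d θ Δ (n + 1) A else 0)
        = levelProb d θ Δ n B := by
      have e : ∀ A : LConf d (n + 1),
          (if restrictChild 0 A = B then levelProb d θ Δ (n + 1) A else 0)
            = pst θ Δ 0 * (if restrictChild 0 A = B then Wt θ Δ (n + 1) 0 A else 0)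
              + pst θ Δ 1 * (if restrictChild 0 A = B then Wt θ Δ (n + 1) 1 A else 0) := by
        intro A
        by_cases h : restrictChild 0 A = B <;> simp [h, level_eq, joint_eq]
      rw [Finset.sum_congr rfl fun A _ => e A, Finset.sum_add_distrib,
        ← Finset.mul_sum, ← Finset.mul_sum, hWf0, hWf1,
        level_eq, joint_eq, joint_eq, Fin.sum_univ_two, Fin.sum_univ_two,
        hp0, hp1, hM00, hM01, hM10, hM11]
      ring
    have hSJ : (∑ A : LConf d (n + 1),
        if restrictChild 0 A = B then jointProb d θ Δ (n + 1) 0 A else 0)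
        = θ * jointProb d θ Δ n 0 B + ((1 - θ) * π1) * levelProb d θ Δ n B := by
      have e : ∀ A : LConf d (n + 1),
          (if restrictChild 0 A = B then jointProb d θ Δ (n + 1) 0 A else 0)
            = pst θ Δ 0 * (if restrictChild 0 A = B then Wt θ Δ (n + 1) 0 A else 0) := by
        intro A
        by_cases h : restrictChild 0 A = B <;> simp [h, joint_eq]
      rw [Finset.sum_congr rfl fun A _ => e A, ← Finset.mul_sum, hWf0,
        level_eq, joint_eq, joint_eq, Fin.sum_univ_two,
        hp0, hp1, hM00, hM01]
      ring
    have hqnn : ∀ A : LConf d (n + 1),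
        0 ≤ (if restrictChild 0 A = B then levelProb d θ Δ (n + 1) A else 0) := by
      intro A
      by_cases h : restrictChild 0 A = B
      · rw [if_pos h]; exact level_nonneg hM hp (n + 1) A
      · rw [if_neg h]
    have hcs := cs_sum (fun A => if restrictChild 0 A = B then levelProb d θ Δ (n + 1) A else 0)
      (fun A => post d θ Δ (n + 1) 0 A) hqnn
    have eJ : ∀ A : LConf d (n + 1),
        (if restrictChild 0 A = B then levelProb d θ Δ (n + 1) A else 0)
            * post d θ Δ (n + 1) 0 A
          = (if restrictChild 0 A = B then jointProb d θ Δ (n + 1) 0 A else 0) := by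
      intro A
      by_cases h : restrictChild 0 A = B
      · rw [if_pos h, if_pos h, joint_mul_post hM hp]
      · rw [if_neg h, if_neg h, zero_mul]
    have eT : ∀ A : LConf d (n + 1),
        (if restrictChild 0 A = B then levelProb d θ Δ (n + 1) A else 0)
            * post d θ Δ (n + 1) 0 A ^ 2
          = (if restrictChild 0 A = B
              then levelProb d θ Δ (n + 1) A * post d θ Δ (n + 1) 0 A ^ 2 else 0) := by
      intro A
      by_cases h : restrictChild 0 A = B
      · rw [if_pos h, if_pos h]
      · rw [if_neg h, if_neg h, zero_mul]
    rw [Finset.sum_congr rfl fun A _ => eJ A, Finset.sum_congr rfl fun A _ => eT A,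
      hSJ, hSQ] at hcs
    -- now conclude
    have hTnn : 0 ≤ ∑ A : LConf d (n + 1),
        (if restrictChild 0 A = B
          then levelProb d θ Δ (n + 1) A * post d θ Δ (n + 1) 0 A ^ 2 else 0) := by
      refine Finset.sum_nonneg fun A _ => ?_
      by_cases h : restrictChild 0 A = B
      · rw [if_pos h]
        exact mul_nonneg (level_nonneg hM hp (n + 1) A) (sq_nonneg _)
      · rw [if_neg h]
    have hJnn : 0 ≤ jointProb d θ Δ n 0 B := joint_nonneg hM hp n 0 B
    have hJP : jointProb d θ Δ n 0 B ≤ levelProb d θ Δ n B := joint_le_level hM hp n B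
    have hfP : jointProb d θ Δ n 0 B = levelProb d θ Δ n B * post d θ Δ n 0 B :=
      joint_mul_post hM hp n B
    rcases eq_or_lt_of_le (level_nonneg hM hp n B) with h0 | h0
    · have hJ0 : jointProb d θ Δ n 0 B = 0 := le_antisymm (by rw [← h0] at hJP; exact hJP) hJnn
      rw [← h0, hJ0]
      simpa using hTnn
    · have key : (θ * jointProb d θ Δ n 0 B + ((1 - θ) * π1) * levelProb d θ Δ n B) ^ 2
          = levelProb d θ Δ n B *
              (θ ^ 2 * (levelProb d θ Δ n B * post d θ Δ n 0 B ^ 2)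
                + 2 * θ * ((1 - θ) * π1) * jointProb d θ Δ n 0 B
                + ((1 - θ) * π1) ^ 2 * levelProb d θ Δ n B) := by
        rw [hfP]; ring
      rw [key] at hcs
      exact le_of_mul_le_mul_left hcs h0
  -- sum over fibers
  have hsumB := Finset.sum_le_sum (fun B (_ : B ∈ Finset.univ) => hfiber B)
  rw [fiber_partition (fun A : LConf d (n + 1) => restrictChild 0 A)
    (fun A => levelProb d θ Δ (n + 1) A * post d θ Δ (n + 1) 0 A ^ 2)] at hsumB
  rw [Finset.sum_add_distrib, Finset.sum_add_distrib, ← Finset.mul_sum, ← Finset.mul_sum,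
    ← Finset.mul_sum, sum_joint, sum_level, hp0] at hsumB
  -- translate to xseq
  have hx : xseq d θ Δ n
      = (∑ B : LConf d n, levelProb d θ Δ n B * post d θ Δ n 0 B ^ 2) / π1 - π1 := by
    rw [xseq_eq hM hp (ne_of_gt hp0pos) n, hp0]
  have hx' : xseq d θ Δ (n + 1)
      = (∑ A : LConf d (n + 1),
          levelProb d θ Δ (n + 1) A * post d θ Δ (n + 1) 0 A ^ 2) / π1 - π1 := by
    rw [xseq_eq hM hp (ne_of_gt hp0pos) (n + 1), hp0]
  have e1 : (∑ B : LConf d n, levelProb d θ Δ n B * post d θ Δ n 0 B ^ 2)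
      = π1 * xseq d θ Δ n + π1 ^ 2 := by
    rw [hx]; field_simp; ring
  have e2 : (∑ A : LConf d (n + 1),
      levelProb d θ Δ (n + 1) A * post d θ Δ (n + 1) 0 A ^ 2)
      = π1 * xseq d θ Δ (n + 1) + π1 ^ 2 := by
    rw [hx']; field_simp; ring
  rw [e1, e2] at hsumB
  have hmul : π1 * (θ ^ 2 * xseq d θ Δ n) ≤ π1 * xseq d θ Δ (n + 1) := by nlinarith [hsumB]
  exact le_of_mul_le_mul_left hmul hpi1

end Aux

/-- Fix `ϱ > 0` and assume `|θ| > ϱ` and `dθ² ≤ 1`. Then there is a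
constant `γ = γ(π, ϱ) > 0` such that `x_{n+1} ≥ γ x_n` for all `n ≥ 0`. -/
theorem xseq_no_sudden_drop (π1 π2 : ℝ) (hsum : π1 + π2 = 1) (hord : π2 ≤ π1)
    (hpi2 : 0 < π2) :
    ∀ ϱ : ℝ, 0 < ϱ → ∃ γ : ℝ, 0 < γ ∧
      ∀ d : ℕ, 2 ≤ d → ∀ θ : ℝ, ϱ < |θ| →
        (∀ i j, 0 < Mmat θ (Dlt θ π1 π2) i j) → (d : ℝ) * θ ^ 2 ≤ 1 →
        ∀ n : ℕ, γ * xseq d θ (Dlt θ π1 π2) n ≤ xseq d θ (Dlt θ π1 π2) (n + 1) := by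
  intro ϱ hϱ
  refine ⟨ϱ ^ 2, by positivity, ?_⟩
  intro d hd θ hθabs hM hdθ n
  haveI : NeZero d := ⟨by omega⟩
  have hpi1 : 0 < π1 := lt_of_lt_of_le hpi2 hord
  have hπ2 : π2 = 1 - π1 := by linarith
  subst hπ2
  have hd2 : (2 : ℝ) ≤ (d : ℝ) := by exact_mod_cast hd
  have hθ2 : θ ^ 2 ≤ 1 / 2 := by nlinarith [sq_nonneg θ]
  have h1θ : 0 < 1 - θ := by nlinarith [sq_nonneg (θ - 1)]
  have h1θ' : (1 : ℝ) - θ ≠ 0 := ne_of_gt h1θ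
  set Δ : ℝ := Dlt θ π1 (1 - π1) with hΔdef
  have hΔ : Δ = (1 - θ) * ((1 - π1) - π1) := by rw [hΔdef]; rfl
  have hp0 : pst θ Δ 0 = π1 := by
    show 1 / 2 - Δ / (2 * (1 - θ)) = π1
    rw [hΔ]
    field_simp
    ring
  have hp1 : pst θ Δ 1 = 1 - π1 := by
    have := pst_add θ Δ
    rw [hp0] at this; linarith
  have hp : ∀ i : Fin 2, 0 ≤ pst θ Δ i := by
    intro i
    have h2 : i = 0 ∨ i = 1 := by omega
    rcases h2 with h | h <;> rw [h]
    · rw [hp0]; linarith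
    · rw [hp1]; linarith
  have hMnn : ∀ i j, 0 ≤ Mmat θ Δ i j := fun i j => (hM i j).le
  have hM00 : Mmat θ Δ 0 0 = θ + (1 - θ) * π1 := by
    show (1 + θ - Δ) / 2 = _
    rw [hΔ]; ring
  have hM01 : Mmat θ Δ 0 1 = (1 - θ) * (1 - π1) := by
    show (1 - θ + Δ) / 2 = _
    rw [hΔ]; ring
  have hM10 : Mmat θ Δ 1 0 = (1 - θ) * π1 := by
    show (1 - θ - Δ) / 2 = _
    rw [hΔ]; ring
  have hM11 : Mmat θ Δ 1 1 = θ + (1 - θ) * (1 - π1) := by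
    show (1 + θ + Δ) / 2 = _
    rw [hΔ]; ring
  have hkey := key_step (d := d) (θ := θ) (Δ := Δ) π1 hpi1 hMnn hp hp0
    hM00 hM01 hM10 hM11 n
  have hnn := xseq_nonneg (d := d) hMnn hp (by rw [hp0]; exact hpi1) n
  have hρθ : ϱ ^ 2 ≤ θ ^ 2 := by
    have h1 : ϱ ≤ |θ| := le_of_lt hθabs
    have h2 : ϱ ^ 2 ≤ |θ| ^ 2 := by nlinarith [abs_nonneg θ]
    rwa [sq_abs] at h2
  nlinarith [hkey, hnn, hρθ, mul_le_mul_of_nonneg_right hρθ hnn]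

end AsymIsing
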